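/- arXiv:2206.01732 — 2 statements merged into one kernel-verified Lean document; each statement's English description precedes it below -/
import Mathlib

section
/- Let h : ℝ → ℝ be continuously differentiable and suppose there exists ε₀ > 0 such that |1 + h'(x)| ≥ ε₀ for all x. Then the map F(x) = x + h(x) is a bijection from ℝ to ℝ, and its inverse ρ is Lipschitz continuous with Lipschitz constant at most 1/ε₀. -/
/-- Auxiliary: if `f` has derivative `f' x ≥ ε₀ > 0` everywhere, then `f` is
bijective and expands distances by factor `ε₀`. -/
lemma aux_pos (f f' : ℝ → ℝ) (ε₀ : ℝ) (hε₀ : 0 < ε₀)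
    (hd : ∀ x, HasDerivAt f (f' x) x) (hb : ∀ x, ε₀ ≤ f' x) :
    Function.Bijective f ∧ ∀ x y : ℝ, ε₀ * |x - y| ≤ |f x - f y| := by
  set g : ℝ → ℝ := fun x => f x - ε₀ * x with hg
  have hgd : ∀ x, HasDerivAt g (f' x - ε₀) x := by
    intro x
    exact ((hd x).sub ((hasDerivAt_id x).const_mul ε₀)).congr_deriv (by simp)
  have hgmono : Monotone g := by
    apply monotone_of_deriv_nonneg
    · exact fun x => ((hgd x).differentiableAt)
    · intro x
      rw [(hgd x).deriv]
      linarith [hb x]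
  have key : ∀ x y : ℝ, x ≤ y → ε₀ * (y - x) ≤ f y - f x := by
    intro x y hxy
    have := hgmono hxy
    simp only [g] at this
    nlinarith
  have keyabs : ∀ x y : ℝ, ε₀ * |x - y| ≤ |f x - f y| := by
    intro x y
    rcases le_total x y with hxy | hxy
    · have h1 := key x y hxy
      rw [abs_sub_comm x y, abs_of_nonneg (by nlinarith), abs_sub_comm,
        abs_of_nonneg (by nlinarith)]
      linarith
    · have h1 := key y x hxy
      rw [abs_of_nonneg (by nlinarith), abs_of_nonneg (by nlinarith)]
      linarith
  have hinj : Function.Injective f := by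
    intro a b hab
    by_contra hne
    have : ε₀ * |a - b| ≤ 0 := by simpa [hab] using keyabs a b
    have : |a - b| ≤ 0 := by nlinarith [abs_nonneg (a - b)]
    have := sub_ne_zero_of_ne hne
    simp [abs_nonpos_iff] at this ⊢
    exact absurd (abs_nonpos_iff.mp ‹|a - b| ≤ 0›) this
  have hcont : Continuous f := by
    have : Differentiable ℝ f := fun x => (hd x).differentiableAt
    exact this.continuous
  have htop : Filter.Tendsto f Filter.atTop Filter.atTop := by
    refine Filter.tendsto_atTop_mono' _ ?_ (Filter.tendsto_atTop_add_const_left _ (f 0)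
      (Filter.Tendsto.const_mul_atTop hε₀ Filter.tendsto_id))
    filter_upwards [Filter.eventually_ge_atTop (0 : ℝ)] with x hx
    have := key 0 x hx
    simp only [id]
    linarith
  have hbot : Filter.Tendsto f Filter.atBot Filter.atBot := by
    refine Filter.tendsto_atBot_mono' _ ?_ (Filter.tendsto_atBot_add_const_left _ (f 0)
      (Filter.Tendsto.const_mul_atBot hε₀ Filter.tendsto_id))
    filter_upwards [Filter.eventually_le_atBot (0 : ℝ)] with x hx
    have := key x 0 hx
    simp only [id]
    linarith
  exact ⟨⟨hinj, hcont.surjective htop hbot⟩, keyabs⟩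

/-- If `h : ℝ → ℝ` is C¹ and `|1 + h'(x)| ≥ ε₀ > 0` everywhere, then
`F x = x + h x` is a bijection of ℝ whose inverse is `1/ε₀`-Lipschitz. -/
theorem stmt_0 (h : ℝ → ℝ) (hh : ContDiff ℝ 1 h) (ε₀ : ℝ) (hε₀ : 0 < ε₀)
    (hder : ∀ x : ℝ, ε₀ ≤ |1 + deriv h x|) :
    Function.Bijective (fun x : ℝ => x + h x) ∧
    ∃ ρ : ℝ → ℝ,
      Function.LeftInverse ρ (fun x : ℝ => x + h x) ∧
      Function.RightInverse ρ (fun x : ℝ => x + h x) ∧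
      ∀ x y : ℝ, |ρ x - ρ y| ≤ (1 / ε₀) * |x - y| := by
  set F : ℝ → ℝ := fun x => x + h x with hF
  set D : ℝ → ℝ := fun x => 1 + deriv h x with hD
  have hdiff : Differentiable ℝ h := hh.differentiable one_ne_zero
  have hDcont : Continuous D := continuous_const.add (hh.continuous_deriv le_rfl)
  have hDne : ∀ x, D x ≠ 0 := by
    intro x hx
    have := hder x
    rw [show (1 + deriv h x) = D x from rfl, hx] at this
    simp at this
    linarith
  have hFd : ∀ x, HasDerivAt F (D x) x := by
    intro x
    exact ((hasDerivAt_id x).add (hdiff x).hasDerivAt).congr_deriv (by simp [hD])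
  -- constant sign of D
  have hsign : (∀ x, 0 < D x) ∨ (∀ x, D x < 0) := by
    rcases lt_or_gt_of_ne (hDne 0) with h0 | h0
    · right
      intro x
      by_contra hx
      have hx' : 0 < D x := lt_of_le_of_ne (not_lt.mp hx) (Ne.symm (hDne x))
      rcases le_total x 0 with hx0 | hx0
      · have : (0:ℝ) ∈ Set.Icc (D 0) (D x) := ⟨le_of_lt h0, le_of_lt hx'⟩
        obtain ⟨z, _, hz⟩ := intermediate_value_Icc' hx0 (hDcont.continuousOn) this
        exact hDne z hz
      · have : (0:ℝ) ∈ Set.Icc (D 0) (D x) := ⟨le_of_lt h0, le_of_lt hx'⟩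
        obtain ⟨z, _, hz⟩ := intermediate_value_Icc hx0 (hDcont.continuousOn) this
        exact hDne z hz
    · left
      intro x
      by_contra hx
      have hx' : D x < 0 := lt_of_le_of_ne (not_lt.mp hx) (hDne x)
      rcases le_total x 0 with hx0 | hx0
      · have : (0:ℝ) ∈ Set.Icc (D x) (D 0) := ⟨le_of_lt hx', le_of_lt h0⟩
        obtain ⟨z, _, hz⟩ := intermediate_value_Icc hx0 (hDcont.continuousOn) this
        exact hDne z hz
      · have : (0:ℝ) ∈ Set.Icc (D x) (D 0) := ⟨le_of_lt hx', le_of_lt h0⟩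
        obtain ⟨z, _, hz⟩ := intermediate_value_Icc' hx0 (hDcont.continuousOn) this
        exact hDne z hz
  -- in either case get bijectivity and expansion
  have main : Function.Bijective F ∧ ∀ x y : ℝ, ε₀ * |x - y| ≤ |F x - F y| := by
    rcases hsign with hpos | hneg
    · apply aux_pos F D ε₀ hε₀ hFd
      intro x
      have := hder x
      rwa [abs_of_pos (hpos x)] at this
    · have hneg' : ∀ x, ε₀ ≤ -(D x) := by
        intro x
        have := hder x
        rwa [abs_of_neg (hneg x)] at this
      obtain ⟨hbij, hexp⟩ := aux_pos (fun x => -(F x)) (fun x => -(D x)) ε₀ hε₀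
        (fun x => (hFd x).neg) hneg'
      constructor
      · have : F = (fun y : ℝ => -y) ∘ (fun x => -(F x)) := by
          funext x; simp
        rw [this]
        exact (neg_involutive.bijective).comp hbij
      · intro x y
        have := hexp x y
        calc ε₀ * |x - y| ≤ |(-(F x)) - (-(F y))| := this
          _ = |F x - F y| := by rw [← abs_neg]; ring_nf
  obtain ⟨hbij, hexp⟩ := main
  refine ⟨hbij, Function.invFun F, Function.leftInverse_invFun hbij.1,
    Function.rightInverse_invFun hbij.2, ?_⟩
  intro x y
  set ρ := Function.invFun F
  have hx : F (ρ x) = x := Function.rightInverse_invFun hbij.2 x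
  have hy : F (ρ y) = y := Function.rightInverse_invFun hbij.2 y
  have := hexp (ρ x) (ρ y)
  rw [hx, hy] at this
  rw [div_mul_eq_mul_div, le_div_iff₀ hε₀, one_mul, mul_comm]
  linarith
end

section
/- Suppose nonnegative measurable functions u₁, ..., u_N : [0,T] → [0,∞) satisfy, for constants a ≥ 0, C > 0 and all i and t, u_i(t) ≤ a + C ∫₀^t u_i(s) ds + (C/N) Σ_{j=1}^N ∫₀^t u_j(s) ds. Then there exists a constant C' depending only on C and T (not on N) such that u_i(t) ≤ C'·a for all i and t ∈ [0,T]. -/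
open MeasureTheory

lemma gron_mono_aux (T : ℝ) (f : ℝ → ℝ)
    (hint : IntegrableOn f (Set.Icc 0 T))
    (hpos : ∀ t ∈ Set.Icc (0:ℝ) T, 0 ≤ f t)
    {s t : ℝ} (hs : 0 ≤ s) (hst : s ≤ t) (htT : t ≤ T) :
    (∫ x in (0:ℝ)..s, f x) ≤ ∫ x in (0:ℝ)..t, f x := by
  apply intervalIntegral.integral_mono_interval le_rfl hs hst
  · filter_upwards [ae_restrict_mem measurableSet_Ioc] with x hx
    exact hpos x ⟨le_of_lt hx.1, hx.2.trans htT⟩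
  · apply IntegrableOn.intervalIntegrable
    rw [Set.uIcc_of_le (hs.trans hst)]
    exact hint.mono_set (Set.Icc_subset_Icc le_rfl htT)

lemma gron (K T a : ℝ) (hK : 0 ≤ K) (hT : 0 < T) (ha : 0 ≤ a) (f : ℝ → ℝ)
    (hint : IntegrableOn f (Set.Icc 0 T))
    (hpos : ∀ t ∈ Set.Icc (0:ℝ) T, 0 ≤ f t)
    (hb : ∀ t ∈ Set.Icc (0:ℝ) T, f t ≤ a + K * ∫ s in (0:ℝ)..t, f s) :
    ∫ s in (0:ℝ)..T, f s ≤ 2 * T * 2 ^ (⌈2*K*T⌉₊ + 1) * a := by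
  set n : ℕ := ⌈2*K*T⌉₊ + 1 with hn
  have hn1 : (1:ℝ) ≤ (n:ℝ) := by exact_mod_cast Nat.one_le_iff_ne_zero.mpr (Nat.succ_ne_zero _)
  have hn0 : 0 < (n:ℝ) := by linarith
  set h : ℝ := T / n with hh
  have hh0 : 0 < h := by positivity
  have hhT : h ≤ T := by
    rw [hh]; exact div_le_self hT.le hn1
  have hKh : K * h ≤ 1 / 2 := by
    have h1 : 2*K*T ≤ (n:ℝ) := le_trans (Nat.le_ceil _) (by exact_mod_cast Nat.le_succ _)
    rw [hh, ← mul_div_assoc, div_le_div_iff₀ hn0 (by norm_num : (0:ℝ) < 2)]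
    nlinarith
  have hjhT : ∀ j : ℕ, j ≤ n → (j:ℝ) * h ≤ T := by
    intro j hj
    rw [hh, ← mul_div_assoc, div_le_iff₀ hn0]
    have : (j:ℝ) ≤ (n:ℝ) := by exact_mod_cast hj
    nlinarith
  have hii : ∀ x y : ℝ, 0 ≤ x → x ≤ y → y ≤ T → IntervalIntegrable f volume x y := by
    intro x y hx hxy hyT
    apply IntegrableOn.intervalIntegrable
    rw [Set.uIcc_of_le hxy]
    exact hint.mono_set (Set.Icc_subset_Icc hx hyT)
  have hmono : ∀ s t : ℝ, 0 ≤ s → s ≤ t → t ≤ T →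
      (∫ x in (0:ℝ)..s, f x) ≤ ∫ x in (0:ℝ)..t, f x := by
    intro s t hs hst htT
    exact gron_mono_aux T f hint hpos hs hst htT
  have hFnn : ∀ t : ℝ, 0 ≤ t → t ≤ T → 0 ≤ ∫ x in (0:ℝ)..t, f x := by
    intro t ht htT
    exact intervalIntegral.integral_nonneg ht (fun x hx => hpos x ⟨hx.1, hx.2.trans htT⟩)
  have key : ∀ j : ℕ, j ≤ n → (∫ x in (0:ℝ)..((j:ℝ)*h), f x) ≤ 2 * T * (2 ^ j - 1) * a := by
    intro j
    induction j with
    | zero => intro _; simp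
    | succ j ih =>
      intro hj1
      have hj : j ≤ n := le_of_lt hj1
      set t0 : ℝ := (j:ℝ) * h with ht0
      set t1 : ℝ := ((j+1:ℕ):ℝ) * h with ht1
      have ht0nn : 0 ≤ t0 := by positivity
      have ht01 : t0 ≤ t1 := by
        rw [ht0, ht1]; push_cast; nlinarith
      have ht1T : t1 ≤ T := hjhT (j+1) hj1
      have ht0T : t0 ≤ T := le_trans ht01 ht1T
      have ht1nn : 0 ≤ t1 := le_trans ht0nn ht01
      have hd : t1 - t0 = h := by rw [ht0, ht1]; push_cast; ring
      have hsplit : (∫ x in (0:ℝ)..t1, f x)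
          = (∫ x in (0:ℝ)..t0, f x) + ∫ x in t0..t1, f x :=
        (intervalIntegral.integral_add_adjacent_intervals
          (hii 0 t0 le_rfl ht0nn ht0T) (hii t0 t1 ht0nn ht01 ht1T)).symm
      have hstep : (∫ x in t0..t1, f x)
          ≤ h * (a + K * ∫ x in (0:ℝ)..t1, f x) := by
        have hmo : (∫ x in t0..t1, f x)
            ≤ ∫ _x in t0..t1, (a + K * ∫ y in (0:ℝ)..t1, f y) := by
          apply intervalIntegral.integral_mono_on ht01 (hii t0 t1 ht0nn ht01 ht1T)
            intervalIntegrable_const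
          intro x hx
          have hx0 : 0 ≤ x := le_trans ht0nn hx.1
          have hxT : x ≤ T := le_trans hx.2 ht1T
          calc f x ≤ a + K * ∫ y in (0:ℝ)..x, f y := hb x ⟨hx0, hxT⟩
            _ ≤ a + K * ∫ y in (0:ℝ)..t1, f y := by
                have := hmono x t1 hx0 (hx.2) ht1T
                nlinarith
        rw [intervalIntegral.integral_const, hd] at hmo
        simpa using hmo
      have hF1nn : 0 ≤ ∫ x in (0:ℝ)..t1, f x := hFnn t1 ht1nn ht1T
      have hrec : (∫ x in (0:ℝ)..t1, f x) ≤ 2 * (∫ x in (0:ℝ)..t0, f x) + 2 * T * a := by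
        nlinarith [hKh, hF1nn, ha, hhT, hh0]
      have hih := ih hj
      have hp : (2:ℝ) ^ (j+1) = 2 * 2 ^ j := by ring
      calc (∫ x in (0:ℝ)..t1, f x) ≤ 2 * (∫ x in (0:ℝ)..t0, f x) + 2 * T * a := hrec
        _ ≤ 2 * (2 * T * (2 ^ j - 1) * a) + 2 * T * a := by linarith
        _ = 2 * T * (2 ^ (j+1) - 1) * a := by rw [hp]; ring
  have hTn : (n:ℝ) * h = T := by
    rw [hh]; field_simp
  have := key n le_rfl
  rw [hTn] at this
  have h2 : (0:ℝ) < 2 ^ n := by positivity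
  calc (∫ s in (0:ℝ)..T, f s) ≤ 2 * T * (2 ^ n - 1) * a := this
    _ ≤ 2 * T * 2 ^ n * a := by nlinarith

/-- A Grönwall-type lemma uniform in `N`: if nonnegative integrable
`u₁,…,u_N` satisfy
`u_i(t) ≤ a + C ∫₀ᵗ u_i + (C/N) Σ_j ∫₀ᵗ u_j` on `[0,T]`, then
`u_i(t) ≤ C'·a` for a constant `C'` depending only on `C` and `T`. -/
theorem stmt_14 (T C : ℝ) (hT : 0 < T) (hC : 0 < C) :
    ∃ C' : ℝ, 0 < C' ∧
      ∀ N : ℕ, 0 < N → ∀ (u : Fin N → ℝ → ℝ) (a : ℝ), 0 ≤ a →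
      (∀ i, IntegrableOn (u i) (Set.Icc 0 T)) →
      (∀ i, ∀ t ∈ Set.Icc (0 : ℝ) T, 0 ≤ u i t) →
      (∀ i, ∀ t ∈ Set.Icc (0 : ℝ) T,
        u i t ≤ a + C * ∫ s in (0 : ℝ)..t, u i s +
          (C / N) * ∑ j, ∫ s in (0 : ℝ)..t, u j s) →
      ∀ i, ∀ t ∈ Set.Icc (0 : ℝ) T, u i t ≤ C' * a := by
  set C2 : ℝ := C ^ 2 * T with hC2def
  have hC2 : 0 < C2 := by rw [hC2def]; positivity
  set D : ℝ := 2 * T * 2 ^ (⌈2 * (C + C2) * T⌉₊ + 1) with hD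
  set D' : ℝ := 2 * T * 2 ^ (⌈2 * C * T⌉₊ + 1) with hD'
  have hDpos : 0 < D := by rw [hD]; positivity
  have hD'pos : 0 < D' := by rw [hD']; positivity
  refine ⟨(1 + C * D') * (1 + C2 * D), by positivity, ?_⟩
  intro N hN u a ha hint hpos hb i t ht
  have hNR : 0 < (N:ℝ) := by exact_mod_cast hN
  have hiv : ∀ (j : Fin N) (x : ℝ), 0 ≤ x → x ≤ T →
      IntervalIntegrable (u j) volume 0 x := by
    intro j x hx hxT
    apply IntegrableOn.intervalIntegrable
    rw [Set.uIcc_of_le hx]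
    exact (hint j).mono_set (Set.Icc_subset_Icc le_rfl hxT)
  have hSnn : ∀ s : ℝ, 0 ≤ s → s ≤ T → 0 ≤ ∑ j, ∫ x in (0:ℝ)..s, u j x := by
    intro s hs hsT
    exact Finset.sum_nonneg fun j _ => intervalIntegral.integral_nonneg hs
      (fun x hx => hpos j x ⟨hx.1, hx.2.trans hsT⟩)
  -- unfold the parsed hypothesis into the intended form (with a worse coupling constant)
  have hb' : ∀ (k : Fin N), ∀ s ∈ Set.Icc (0:ℝ) T,
      u k s ≤ a + C * (∫ x in (0:ℝ)..s, u k x)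
        + (C2 / N) * ∑ j, ∫ x in (0:ℝ)..s, u j x := by
    intro k s hs
    have h0 := hb k s hs
    rw [intervalIntegral.integral_add (hiv k s hs.1 hs.2) intervalIntegrable_const,
      intervalIntegral.integral_const, smul_eq_mul, mul_add] at h0
    have hS := hSnn s hs.1 hs.2
    have hc : 0 ≤ (C / (N:ℝ)) * ∑ j, ∫ x in (0:ℝ)..s, u j x := by positivity
    have key2 : C * ((s - 0) * ((C / (N:ℝ)) * ∑ j, ∫ x in (0:ℝ)..s, u j x))
        ≤ (C2 / (N:ℝ)) * ∑ j, ∫ x in (0:ℝ)..s, u j x := by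
      have h1 : s - 0 ≤ T := by linarith [hs.2]
      calc C * ((s - 0) * ((C / (N:ℝ)) * ∑ j, ∫ x in (0:ℝ)..s, u j x))
          ≤ C * (T * ((C / (N:ℝ)) * ∑ j, ∫ x in (0:ℝ)..s, u j x)) :=
            mul_le_mul_of_nonneg_left (mul_le_mul_of_nonneg_right h1 hc) hC.le
        _ = (C2 / (N:ℝ)) * ∑ j, ∫ x in (0:ℝ)..s, u j x := by
            rw [hC2def]; field_simp
    linarith
  -- the averaged function
  set ub : ℝ → ℝ := fun s => (N:ℝ)⁻¹ * ∑ j, u j s with hub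
  have hint_ub : IntegrableOn ub (Set.Icc 0 T) :=
    (integrable_finset_sum _ (fun j _ => hint j)).const_mul _
  have hpos_ub : ∀ s ∈ Set.Icc (0:ℝ) T, 0 ≤ ub s := by
    intro s hs
    exact mul_nonneg (by positivity) (Finset.sum_nonneg fun j _ => hpos j s hs)
  have hFub : ∀ s : ℝ, 0 ≤ s → s ≤ T →
      (∫ x in (0:ℝ)..s, ub x) = (N:ℝ)⁻¹ * ∑ j, ∫ x in (0:ℝ)..s, u j x := by
    intro s hs hsT
    rw [hub]
    rw [intervalIntegral.integral_const_mul,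
      intervalIntegral.integral_finset_sum (fun j _ => hiv j s hs hsT)]
  have hb_ub : ∀ s ∈ Set.Icc (0:ℝ) T, ub s ≤ a + (C + C2) * ∫ x in (0:ℝ)..s, ub x := by
    intro s hs
    have hsum := Finset.sum_le_sum (fun j (_ : j ∈ Finset.univ) => hb' j s hs)
    set S : ℝ := ∑ j, ∫ x in (0:ℝ)..s, u j x with hS
    have hrhs : (∑ j : Fin N, (a + C * (∫ x in (0:ℝ)..s, u j x) + (C2/(N:ℝ)) * S))
        = (N:ℝ) * a + (C + C2) * S := by
      rw [Finset.sum_add_distrib, Finset.sum_add_distrib, Finset.sum_const,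
        ← Finset.mul_sum, Finset.sum_const]
      simp only [Finset.card_univ, Fintype.card_fin, nsmul_eq_mul, ← hS]
      field_simp
      ring
    have hsum2 := hsum.trans_eq hrhs
    rw [hFub s hs.1 hs.2, hub]
    simp only
    have h2 : (N:ℝ)⁻¹ * (∑ j, u j s) ≤ (N:ℝ)⁻¹ * ((N:ℝ) * a + (C + C2) * S) :=
      mul_le_mul_of_nonneg_left hsum2 (by positivity)
    have h3 : (N:ℝ)⁻¹ * ((N:ℝ) * a + (C + C2) * S) = a + (C + C2) * ((N:ℝ)⁻¹ * S) := by
      field_simp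
    linarith
  have hI : (∫ x in (0:ℝ)..T, ub x) ≤ D * a := by
    rw [hD]
    exact gron (C + C2) T a (by positivity) hT ha ub hint_ub hpos_ub hb_ub
  -- step 2: individual bound
  set a' : ℝ := (1 + C2 * D) * a with ha'def
  have ha' : 0 ≤ a' := by positivity
  have hb2 : ∀ s ∈ Set.Icc (0:ℝ) T, u i s ≤ a' + C * ∫ x in (0:ℝ)..s, u i x := by
    intro s hs
    have h1 := hb' i s hs
    have h2 : (C2 / N) * ∑ j, ∫ x in (0:ℝ)..s, u j x
        = C2 * ∫ x in (0:ℝ)..s, ub x := by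
      rw [hFub s hs.1 hs.2]
      field_simp
    have h3 : (∫ x in (0:ℝ)..s, ub x) ≤ ∫ x in (0:ℝ)..T, ub x :=
      gron_mono_aux T ub hint_ub hpos_ub hs.1 hs.2 le_rfl
    have h4 : C2 * (∫ x in (0:ℝ)..s, ub x) ≤ C2 * (D * a) :=
      mul_le_mul_of_nonneg_left (le_trans h3 hI) hC2.le
    rw [h2] at h1
    rw [ha'def]
    have hexp : (1 + C2 * D) * a = a + C2 * (D * a) := by ring
    rw [hexp]
    linarith
  have hI2 : (∫ x in (0:ℝ)..T, u i x) ≤ D' * a' := by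
    rw [hD']
    exact gron C T a' hC.le hT ha' (u i) (hint i) (hpos i) hb2
  have h5 := hb2 t ht
  have h6 : (∫ x in (0:ℝ)..t, u i x) ≤ ∫ x in (0:ℝ)..T, u i x :=
    gron_mono_aux T (u i) (hint i) (hpos i) ht.1 ht.2 le_rfl
  have h7 : u i t ≤ a' + C * (D' * a') := by
    have := mul_le_mul_of_nonneg_left (h6.trans hI2) hC.le
    linarith
  calc u i t ≤ a' + C * (D' * a') := h7
    _ = (1 + C * D') * (1 + C2 * D) * a := by rw [ha'def]; ring
end
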